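/- Let P be an irreducible aperiodic stochastic matrix on a finite state space X with stationary distribution d and group inverse D of I − P. Let M(x,y) denote the mean first hitting time of state y starting from x (with M(x,x) = 0), and let κ := Σ_y d(y) M(x,y) be Kemeny's constant (independent of x). Then τ₁[D] = κ − min_{x,y∈X} Σ_{z∈X} d(z) min(M(x,z), M(y,z)), and in particular τ₁[D] ≤ κ. -/

import Mathlib

open Matrix

set_option linter.unusedSectionVars false
set_option maxHeartbeats 1000000

section AuxLemmas
open Finset
variable {X : Type*} [Fintype X] [DecidableEq X] [Nonempty X]

lemma powStoch (P : Matrix X X ℝ) (hP0 : ∀ x y, 0 ≤ P x y) (hP1 : ∀ x, ∑ y, P x y = 1) :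
    ∀ t, (∀ x y, 0 ≤ (P ^ t) x y) ∧ (∀ x, ∑ y, (P ^ t) x y = 1) := by
  intro t
  induction t with
  | zero =>
    refine ⟨fun x y => ?_, fun x => ?_⟩
    · rw [pow_zero]; rw [Matrix.one_apply]; split <;> norm_num
    · rw [pow_zero]; simp [Matrix.one_apply]
  | succ n ih =>
    rw [pow_succ]
    refine ⟨fun x y => ?_, fun x => ?_⟩
    · rw [Matrix.mul_apply]
      exact Finset.sum_nonneg fun z _ => mul_nonneg (ih.1 x z) (hP0 z y)
    · simp only [Matrix.mul_apply]
      rw [Finset.sum_comm]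
      simp_rw [← Finset.mul_sum, hP1, mul_one]
      exact ih.2 x

lemma statPow (P : Matrix X X ℝ) (d : X → ℝ) (hstat : ∀ y, ∑ x, d x * P x y = d y) :
    ∀ t y, ∑ x, d x * (P ^ t) x y = d y := by
  intro t
  induction t with
  | zero => intro y; simp [Matrix.one_apply]
  | succ n ih =>
    intro y
    rw [pow_succ]
    simp only [Matrix.mul_apply]
    calc ∑ x, d x * ∑ z, (P ^ n) x z * P z y
        = ∑ z, (∑ x, d x * (P ^ n) x z) * P z y := by
          simp_rw [Finset.mul_sum, Finset.sum_mul, ← mul_assoc]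
          rw [Finset.sum_comm]
      _ = d y := by simp_rw [ih]; exact hstat y

lemma spread (a f : X → ℝ) (ha : ∑ z, a z = 0) (B : ℝ)
    (hB : ∀ z w, |f z - f w| ≤ B) :
    |∑ z, a z * f z| ≤ (∑ z, max (a z) 0) * B := by
  obtain ⟨z0, -, hz0⟩ := Finset.exists_min_image Finset.univ f ⟨Classical.arbitrary X, mem_univ _⟩
  obtain ⟨z1, -, hz1⟩ := Finset.exists_max_image Finset.univ f ⟨Classical.arbitrary X, mem_univ _⟩
  have key : ∀ w : X, ∑ z, a z * f z = ∑ z, a z * (f z - f w) := by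
    intro w
    simp_rw [mul_sub, Finset.sum_sub_distrib, ← Finset.sum_mul, ha, zero_mul, sub_zero]
  rw [abs_le]
  constructor
  · rw [key z1]
    have : -((∑ z, max (a z) 0) * B) = ∑ z, -(max (a z) 0 * B) := by
      rw [Finset.sum_mul, ← Finset.sum_neg_distrib]
    rw [this]
    apply Finset.sum_le_sum
    intro z _
    rcases le_or_gt 0 (a z) with h | h
    · have h1 : f z - f z1 ≥ -B := by
        have := hB z z1; rw [abs_le] at this; linarith [this.1]
      have : a z * (f z - f z1) ≥ a z * (-B) := mul_le_mul_of_nonneg_left h1 h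
      rw [max_eq_left h] at *
      nlinarith
    · have h1 : f z - f z1 ≤ 0 := by linarith [hz1 z (mem_univ z)]
      have h2 : 0 ≤ a z * (f z - f z1) := by nlinarith
      rw [max_eq_right h.le]
      simpa using h2
  · rw [key z0]
    rw [Finset.sum_mul]
    apply Finset.sum_le_sum
    intro z _
    rcases le_or_gt 0 (a z) with h | h
    · have h1 : f z - f z0 ≤ B := by
        have := hB z z0; rw [abs_le] at this; linarith [this.2]
      rw [max_eq_left h]
      exact mul_le_mul_of_nonneg_left h1 h
    · have h1 : 0 ≤ f z - f z0 := by linarith [hz0 z (mem_univ z)]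
      have h2 : a z * (f z - f z0) ≤ 0 := mul_nonpos_of_nonpos_of_nonneg h.le h1
      rw [max_eq_right h.le]
      simpa using h2


lemma contract (P : Matrix X X ℝ) (hP0 : ∀ x y, 0 ≤ P x y) (hP1 : ∀ x, ∑ y, P x y = 1)
    (N : ℕ) (hN : 1 ≤ N) (ε : ℝ) (hε0 : 0 < ε) (hε : ∀ x y, ε ≤ (P ^ N) x y) :
    ∀ t x x' y, |(P ^ t) x y - (P ^ t) x' y| ≤ (1 - (Fintype.card X : ℝ) * ε) ^ (t / N) := by
  intro t
  induction t using Nat.strong_induction_on with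
  | _ t ih =>
  set c : ℝ := 1 - (Fintype.card X : ℝ) * ε with hc
  have hc0 : 0 ≤ c := by
    have h := (powStoch P hP0 hP1 N).2 (Classical.arbitrary X)
    have : (Fintype.card X : ℝ) * ε ≤ 1 := by
      rw [← h]
      calc (Fintype.card X : ℝ) * ε = ∑ _y : X, ε := by
            rw [Finset.sum_const, nsmul_eq_mul, Finset.card_univ]
        _ ≤ ∑ y, (P ^ N) (Classical.arbitrary X) y := Finset.sum_le_sum fun y _ => hε _ y
    linarith
  intro x x' y
  rcases lt_or_ge t N with hlt | hge
  · have ht : t / N = 0 := Nat.div_eq_of_lt hlt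
    rw [ht, pow_zero]
    have h1 : ∀ u : X, (P ^ t) u y ≤ 1 := by
      intro u
      calc (P ^ t) u y ≤ ∑ w, (P ^ t) u w :=
            Finset.single_le_sum (fun w _ => (powStoch P hP0 hP1 t).1 u w) (mem_univ y)
        _ = 1 := (powStoch P hP0 hP1 t).2 u
    have h2 := (powStoch P hP0 hP1 t).1 x y
    have h3 := (powStoch P hP0 hP1 t).1 x' y
    rw [abs_le]; constructor <;> [linarith [h1 x']; linarith [h1 x]]
  · have hsplit : P ^ t = P ^ N * P ^ (t - N) := by
      rw [← pow_add, Nat.add_sub_cancel' hge]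
    have hdiv : t / N = (t - N) / N + 1 := by
      conv_lhs => rw [← Nat.sub_add_cancel hge]
      rw [Nat.add_div_right _ (by omega)]
    have hIH : ∀ z w : X, |(P ^ (t - N)) z y - (P ^ (t - N)) w y| ≤ c ^ ((t - N) / N) := by
      intro z w; exact ih (t - N) (by omega) z w y
    have key : |∑ z, ((P ^ N) x z - (P ^ N) x' z) * (P ^ (t - N)) z y|
        ≤ (∑ z, max ((P ^ N) x z - (P ^ N) x' z) 0) * c ^ ((t - N) / N) := by
      apply spread
      · rw [Finset.sum_sub_distrib, (powStoch P hP0 hP1 N).2 x, (powStoch P hP0 hP1 N).2 x']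
        ring
      · intro z w; exact hIH z w
    have hs : (∑ z, max ((P ^ N) x z - (P ^ N) x' z) 0) ≤ c := by
      calc (∑ z, max ((P ^ N) x z - (P ^ N) x' z) 0) ≤ ∑ z, ((P ^ N) x z - ε) := by
            apply Finset.sum_le_sum
            intro z _
            apply max_le
            · linarith [hε x' z]
            · linarith [hε x z]
        _ = c := by
            rw [Finset.sum_sub_distrib, (powStoch P hP0 hP1 N).2 x, Finset.sum_const,
              nsmul_eq_mul, Finset.card_univ, hc]
    have hdiff : (P ^ t) x y - (P ^ t) x' y
        = ∑ z, ((P ^ N) x z - (P ^ N) x' z) * (P ^ (t - N)) z y := by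
      rw [hsplit]
      simp only [Matrix.mul_apply]
      rw [← Finset.sum_sub_distrib]
      congr 1; ext z; ring
    rw [hdiff, hdiv, pow_succ]
    calc |∑ z, ((P ^ N) x z - (P ^ N) x' z) * (P ^ (t - N)) z y|
        ≤ (∑ z, max ((P ^ N) x z - (P ^ N) x' z) 0) * c ^ ((t - N) / N) := key
      _ ≤ c ^ ((t - N) / N) * c := by
          rw [mul_comm]
          apply mul_le_mul_of_nonneg_left hs (pow_nonneg hc0 _)

lemma geomDivSum (c : ℝ) (h0 : 0 ≤ c) (h1 : c < 1) (N : ℕ) (hN : 1 ≤ N) :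
    Summable (fun t : ℕ => c ^ (t / N)) := by
  have hsum : Summable (fun k : ℕ => c ^ k) := summable_geometric_of_lt_one h0 h1
  have block : ∀ K : ℕ, ∑ t ∈ Finset.range (K * N), c ^ (t / N) = N * ∑ k ∈ Finset.range K, c ^ k := by
    intro K
    induction K with
    | zero => simp
    | succ K ihK =>
      rw [Finset.sum_range_succ, Nat.succ_mul, Finset.range_eq_Ico,
        ← Finset.sum_Ico_consecutive _ (Nat.zero_le (K * N)) (Nat.le_add_right (K * N) N)]
      rw [← Finset.range_eq_Ico, ihK]
      have hdiv : ∀ t ∈ Finset.Ico (K * N) (K * N + N), c ^ (t / N) = c ^ K := by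
        intro t ht
        rw [Finset.mem_Ico] at ht
        congr 1
        refine Nat.div_eq_of_lt_le ht.1 ?_
        rw [Nat.succ_mul]
        exact ht.2
      have : ∑ t ∈ Finset.Ico (K * N) (K * N + N), c ^ (t / N) = N * c ^ K := by
        rw [Finset.sum_congr rfl hdiv, Finset.sum_const, Nat.card_Ico,
          Nat.add_sub_cancel_left, nsmul_eq_mul]
      rw [this]; ring
  apply summable_of_sum_range_le (c := N * (1 - c)⁻¹) (fun n => pow_nonneg h0 _)
  intro n
  calc ∑ t ∈ Finset.range n, c ^ (t / N)
      ≤ ∑ t ∈ Finset.range (n * N), c ^ (t / N) := by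
        apply Finset.sum_le_sum_of_subset_of_nonneg
        · exact Finset.range_subset_range.2 (Nat.le_mul_of_pos_right n (by omega))
        · intro t _ _; exact pow_nonneg h0 _
    _ = N * ∑ k ∈ Finset.range n, c ^ k := block n
    _ ≤ N * (1 - c)⁻¹ := by
        apply mul_le_mul_of_nonneg_left _ (Nat.cast_nonneg N)
        calc ∑ k ∈ Finset.range n, c ^ k ≤ ∑' k : ℕ, c ^ k :=
              Summable.sum_le_tsum _ (fun k _ => pow_nonneg h0 _) hsum
          _ = (1 - c)⁻¹ := tsum_geometric_of_lt_one h0 h1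

lemma Zmat (P : Matrix X X ℝ) (d : X → ℝ)
    (hsum : ∀ x y, Summable fun t : ℕ => (P ^ t) x y - d y) :
    (∑' t : ℕ, (P ^ t - Matrix.of fun _ y => d y))
      = Matrix.of (fun x y => ∑' t : ℕ, ((P ^ t) x y - d y)) := by
  apply HasSum.tsum_eq
  refine Pi.hasSum.2 ?_
  intro x
  refine Pi.hasSum.2 ?_
  intro y
  simpa using (hsum x y).hasSum

lemma Zrec (P : Matrix X X ℝ) (hP1 : ∀ x, ∑ y, P x y = 1) (d : X → ℝ)
    (hsum : ∀ x y, Summable fun t : ℕ => (P ^ t) x y - d y) (x y : X) :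
    (∑' t : ℕ, ((P ^ t) x y - d y))
      = ((if x = y then (1:ℝ) else 0) - d y) + ∑ z, P x z * ∑' t : ℕ, ((P ^ t) z y - d y) := by
  have hPi : ∀ z : X, ∑ w, P z w * d y = d y := by
    intro z
    rw [← Finset.sum_mul, hP1 z, one_mul]
  have step : ∀ t : ℕ, ∑ z, P x z * ((P ^ t) z y - d y) = (P ^ (t + 1)) x y - d y := by
    intro t
    have h1 : ∑ z, P x z * (P ^ t) z y = (P ^ (t + 1)) x y := by
      rw [pow_succ']
      rw [Matrix.mul_apply]
    have h2 : ∑ z, P x z * d y = d y := hPi x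
    calc ∑ z, P x z * ((P ^ t) z y - d y)
        = (∑ z, P x z * (P ^ t) z y) - ∑ z, P x z * d y := by
          rw [← Finset.sum_sub_distrib]
          congr 1; ext z; ring
      _ = (P ^ (t + 1)) x y - d y := by rw [h1, h2]
  have swap : ∑ z, P x z * ∑' t : ℕ, ((P ^ t) z y - d y)
      = ∑' t : ℕ, ∑ z, P x z * ((P ^ t) z y - d y) := by
    have h1 : ∀ z : X, P x z * ∑' t : ℕ, ((P ^ t) z y - d y)
        = ∑' t : ℕ, P x z * ((P ^ t) z y - d y) := fun z => (tsum_mul_left).symm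
    simp_rw [h1]
    rw [← Summable.tsum_finsetSum fun z _ => (hsum z y).mul_left (P x z)]
  rw [swap]
  simp_rw [step]
  have shift := Summable.tsum_eq_zero_add (f := fun t : ℕ => (P ^ t) x y - d y) (hsum x y)
  rw [shift]
  simp only [pow_zero, Matrix.one_apply]

lemma Mret (P : Matrix X X ℝ) (d : X → ℝ) (hd1 : ∑ x, d x = 1)
    (hstat : ∀ y, ∑ x, d x * P x y = d y) (M : X → X → ℝ)
    (hMdiag : ∀ x, M x x = 0)
    (hMoff : ∀ x y, x ≠ y → M x y = 1 + ∑ z, P x z * M z y) (y : X) :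
    d y * (1 + ∑ z, P y z * M z y) = 1 := by
  have hR : ∀ x, d x * (M x y - ∑ z, P x z * M z y)
      = d x - (if x = y then d x * (1 + ∑ z, P y z * M z y) else 0) := by
    intro x
    by_cases hxy : x = y
    · subst hxy
      rw [hMdiag x]
      simp
      ring
    · rw [hMoff x y hxy]
      simp [hxy]
  have hsum0 : ∑ x, d x * (M x y - ∑ z, P x z * M z y) = 0 := by
    have h1 : ∑ x, d x * ∑ z, P x z * M z y = ∑ z, d z * M z y := by
      calc ∑ x, d x * ∑ z, P x z * M z y
          = ∑ z, (∑ x, d x * P x z) * M z y := by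
            simp_rw [Finset.mul_sum, Finset.sum_mul, ← mul_assoc]
            rw [Finset.sum_comm]
        _ = ∑ z, d z * M z y := by simp_rw [hstat]
    simp_rw [mul_sub, Finset.sum_sub_distrib, h1, sub_self]
  rw [Finset.sum_congr rfl (fun x _ => hR x), Finset.sum_sub_distrib, hd1] at hsum0
  rw [Finset.sum_ite_eq' Finset.univ y (fun x => d x * (1 + ∑ z, P y z * M z y))] at hsum0
  simp at hsum0
  linarith

lemma Mnonneg (P : Matrix X X ℝ) (hP0 : ∀ x y, 0 ≤ P x y) (hP1 : ∀ x, ∑ y, P x y = 1)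
    (M : X → X → ℝ) (hMdiag : ∀ x, M x x = 0)
    (hMoff : ∀ x y, x ≠ y → M x y = 1 + ∑ z, P x z * M z y) :
    ∀ x y, 0 ≤ M x y := by
  obtain ⟨p, -, hp⟩ := Finset.exists_min_image Finset.univ (fun p : X × X => M p.1 p.2)
    ⟨(Classical.arbitrary X, Classical.arbitrary X), mem_univ _⟩
  have hmin : ∀ x y, M p.1 p.2 ≤ M x y := fun x y => hp (x, y) (mem_univ _)
  have h0 : 0 ≤ M p.1 p.2 := by
    by_contra hneg
    push_neg at hneg
    have hne : p.1 ≠ p.2 := by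
      intro h
      rw [h, hMdiag] at hneg
      exact lt_irrefl 0 hneg
    have h1 : M p.1 p.2 = 1 + ∑ z, P p.1 z * M z p.2 := hMoff _ _ hne
    have h2 : ∑ z, P p.1 z * M p.1 p.2 ≤ ∑ z, P p.1 z * M z p.2 :=
      Finset.sum_le_sum fun z _ => mul_le_mul_of_nonneg_left (hmin z p.2) (hP0 p.1 z)
    rw [← Finset.sum_mul, hP1, one_mul] at h2
    linarith
  intro x y
  exact le_trans h0 (hmin x y)

lemma Gconst (P : Matrix X X ℝ) (hP0 : ∀ x y, 0 ≤ P x y) (hP1 : ∀ x, ∑ y, P x y = 1)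
    (N : ℕ) (hpos : ∀ x y, 0 < (P ^ N) x y)
    (d : X → ℝ) (hd1 : ∑ x, d x = 1) (hstat : ∀ y, ∑ x, d x * P x y = d y)
    (hsum : ∀ x y, Summable fun t : ℕ => (P ^ t) x y - d y)
    (M : X → X → ℝ) (hMdiag : ∀ x, M x x = 0)
    (hMoff : ∀ x y, x ≠ y → M x y = 1 + ∑ z, P x z * M z y) (y : X) :
    ∀ x x', (∑' t : ℕ, ((P ^ t) x y - d y)) + d y * M x y
      = (∑' t : ℕ, ((P ^ t) x' y - d y)) + d y * M x' y := by
  set g : X → ℝ := fun x => (∑' t : ℕ, ((P ^ t) x y - d y)) + d y * M x y with hg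
  have step : ∀ x, g x = ∑ z, P x z * g z := by
    intro x
    have h1 : ∑ z, P x z * g z
        = (∑ z, P x z * ∑' t : ℕ, ((P ^ t) z y - d y)) + ∑ z, P x z * (d y * M z y) := by
      rw [← Finset.sum_add_distrib]
      congr 1; ext z; rw [hg]; ring
    have h2 : ∑ z, P x z * ∑' t : ℕ, ((P ^ t) z y - d y)
        = (∑' t : ℕ, ((P ^ t) x y - d y)) - ((if x = y then (1:ℝ) else 0) - d y) := by
      rw [Zrec P hP1 d hsum x y]; ring
    have h3 : ∑ z, P x z * (d y * M z y)
        = d y * M x y - d y + (if x = y then (1:ℝ) else 0) := by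
      have hfac : ∑ z, P x z * (d y * M z y) = d y * ∑ z, P x z * M z y := by
        rw [Finset.mul_sum]; congr 1; ext z; ring
      by_cases hxy : x = y
      · subst hxy
        have := Mret P d hd1 hstat M hMdiag hMoff x
        rw [hfac, hMdiag x]
        norm_num
        nlinarith
      · rw [hfac, hMoff x y hxy]
        simp only [if_neg hxy]
        ring
    rw [h1, h2, h3, hg]
    ring
  have iter : ∀ t x, g x = ∑ z, (P ^ t) x z * g z := by
    intro t
    induction t with
    | zero =>
      intro x
      simp [Matrix.one_apply]
    | succ n ih =>
      intro x
      rw [step x]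
      have : ∀ z, g z = ∑ w, (P ^ n) z w * g w := ih
      calc ∑ z, P x z * g z = ∑ z, P x z * ∑ w, (P ^ n) z w * g w := by
            congr 1; ext z; rw [← this z]
        _ = ∑ w, (∑ z, P x z * (P ^ n) z w) * g w := by
            simp_rw [Finset.mul_sum, Finset.sum_mul, ← mul_assoc]
            rw [Finset.sum_comm]
        _ = ∑ w, (P ^ (n + 1)) x w * g w := by
            congr 1; ext w
            rw [pow_succ', Matrix.mul_apply]
  obtain ⟨x1, -, hx1⟩ := Finset.exists_max_image Finset.univ g ⟨Classical.arbitrary X, mem_univ _⟩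
  have hconst : ∀ z, g z = g x1 := by
    have h0 : ∑ z, (P ^ N) x1 z * (g x1 - g z) = 0 := by
      have hrow := (powStoch P hP0 hP1 N).2 x1
      calc ∑ z, (P ^ N) x1 z * (g x1 - g z)
          = (∑ z, (P ^ N) x1 z) * g x1 - ∑ z, (P ^ N) x1 z * g z := by
            rw [Finset.sum_mul, ← Finset.sum_sub_distrib]
            congr 1; ext z; ring
        _ = 0 := by rw [hrow, one_mul, ← iter N x1]; ring
    have hnn : ∀ z ∈ Finset.univ, (0:ℝ) ≤ (P ^ N) x1 z * (g x1 - g z) := fun z _ =>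
      mul_nonneg (hpos x1 z).le (by linarith [hx1 z (mem_univ z)])
    intro z
    have := (Finset.sum_eq_zero_iff_of_nonneg hnn).1 h0 z (mem_univ z)
    have hz := (hpos x1 z).ne'
    have : g x1 - g z = 0 := by
      rcases mul_eq_zero.1 this with h | h
      · exact absurd h hz
      · exact h
    linarith
  intro x x'
  show g x = g x'
  rw [hconst x, hconst x']

end AuxLemmas

/-- The one-norm ergodicity coefficient. -/
noncomputable def tau1 {X : Type*} [Fintype X] (A : X → X → ℝ) : ℝ :=
  sSup {r | ∃ v : X → ℝ, (∑ x, |v x|) = 1 ∧ (∑ x, v x) = 0 ∧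
    r = ∑ y, |∑ x, v x * A x y|}

theorem stmt_8 (X : Type*) [Fintype X] [DecidableEq X] [Nonempty X]
    (P : Matrix X X ℝ)
    (hP0 : ∀ x y, 0 ≤ P x y) (hP1 : ∀ x, ∑ y, P x y = 1)
    (hprim : ∃ N : ℕ, ∀ x y, 0 < (P ^ N) x y)
    (d : X → ℝ) (hd0 : ∀ x, 0 ≤ d x) (hd1 : ∑ x, d x = 1)
    (hstat : ∀ y, ∑ x, d x * P x y = d y)
    (M : X → X → ℝ)
    (hMdiag : ∀ x, M x x = 0)
    (hMoff : ∀ x y, x ≠ y → M x y = 1 + ∑ z, P x z * M z y)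
    (κ : ℝ) (hκ : ∀ x, ∑ y, d y * M x y = κ) :
    let Pi : Matrix X X ℝ := Matrix.of fun _ y => d y
    let Z : Matrix X X ℝ := ∑' t : ℕ, (P ^ t - Pi)
    let D : Matrix X X ℝ := Z - Pi
    tau1 (fun x y => D x y)
        = κ - ⨅ x : X, ⨅ y : X, ∑ z, d z * min (M x z) (M y z)
      ∧ tau1 (fun x y => D x y) ≤ κ := by
  intro Pi Z D
  classical
  -- a positive power with positive exponent
  obtain ⟨N0, hN0⟩ := hprim
  have hposN : ∀ x y, 0 < (P ^ (N0 + 1)) x y := by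
    intro x y
    rw [pow_succ']
    rw [Matrix.mul_apply]
    have hex : ∃ z, 0 < P x z := by
      by_contra h
      push_neg at h
      have h1 : ∑ z, P x z ≤ 0 := Finset.sum_nonpos fun z _ => h z
      rw [hP1 x] at h1
      norm_num at h1
    obtain ⟨z0, hz0⟩ := hex
    apply Finset.sum_pos'
    · intro z _; exact mul_nonneg (hP0 x z) (hN0 z y).le
    · exact ⟨z0, Finset.mem_univ z0, mul_pos hz0 (hN0 z0 y)⟩
  set N : ℕ := N0 + 1 with hNdef
  have hN1 : 1 ≤ N := by omega
  -- minimal entry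
  obtain ⟨pε, -, hpε⟩ := Finset.exists_min_image Finset.univ
    (fun p : X × X => (P ^ N) p.1 p.2) ⟨(Classical.arbitrary X, Classical.arbitrary X), Finset.mem_univ _⟩
  set ε : ℝ := (P ^ N) pε.1 pε.2 with hεdef
  have hε0 : 0 < ε := hposN pε.1 pε.2
  have hεle : ∀ x y, ε ≤ (P ^ N) x y := fun x y => hpε (x, y) (Finset.mem_univ _)
  set c : ℝ := 1 - (Fintype.card X : ℝ) * ε with hcdef
  have hc0 : 0 ≤ c := by
    have h := (powStoch P hP0 hP1 N).2 (Classical.arbitrary X)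
    have : (Fintype.card X : ℝ) * ε ≤ 1 := by
      rw [← h]
      calc (Fintype.card X : ℝ) * ε = ∑ _y : X, ε := by
            rw [Finset.sum_const, nsmul_eq_mul, Finset.card_univ]
        _ ≤ _ := Finset.sum_le_sum fun y _ => hεle _ y
    linarith
  have hc1 : c < 1 := by
    have hcard : 0 < (Fintype.card X : ℝ) := by
      have := Fintype.card_pos (α := X)
      positivity
    nlinarith
  -- entrywise bound and summability
  have ebound : ∀ (t : ℕ) x y, |(P ^ t) x y - d y| ≤ c ^ (t / N) := by
    intro t x y
    have hdy : d y = ∑ x', d x' * (P ^ t) x' y := (statPow P d hstat t y).symm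
    have hrepr : (P ^ t) x y - d y = ∑ x', d x' * ((P ^ t) x y - (P ^ t) x' y) := by
      have hs : ∑ x', d x' * ((P ^ t) x y - (P ^ t) x' y)
          = (∑ x', d x' * (P ^ t) x y) - ∑ x', d x' * (P ^ t) x' y := by
        rw [← Finset.sum_sub_distrib]
        exact Finset.sum_congr rfl fun x' _ => by ring
      rw [hs, ← Finset.sum_mul, hd1, one_mul, ← hdy]
    rw [hrepr]
    calc |∑ x', d x' * ((P ^ t) x y - (P ^ t) x' y)|
        ≤ ∑ x', |d x' * ((P ^ t) x y - (P ^ t) x' y)| := Finset.abs_sum_le_sum_abs _ _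
      _ ≤ ∑ x', d x' * c ^ (t / N) := by
          apply Finset.sum_le_sum
          intro x' _
          rw [abs_mul, abs_of_nonneg (hd0 x')]
          exact mul_le_mul_of_nonneg_left (contract P hP0 hP1 N hN1 ε hε0 hεle t x x' y) (hd0 x')
      _ = c ^ (t / N) := by rw [← Finset.sum_mul, hd1, one_mul]
  have hsum : ∀ x y, Summable fun t : ℕ => (P ^ t) x y - d y := by
    intro x y
    apply Summable.of_abs
    apply Summable.of_nonneg_of_le (fun t => abs_nonneg _) (fun t => ebound t x y)
    exact geomDivSum c hc0 hc1 N hN1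
  -- Z entries
  have hZ : ∀ x y, Z x y = ∑' t : ℕ, ((P ^ t) x y - d y) := by
    intro x y
    show (∑' t : ℕ, (P ^ t - Pi)) x y = _
    rw [show Pi = Matrix.of fun _ y => d y from rfl, Zmat P d hsum]
    rfl
  -- basic S facts
  set S : X → X → ℝ := fun a b => ∑ z, d z * min (M a z) (M b z) with hSdef
  set m : ℝ := ⨅ x : X, ⨅ y : X, S x y with hmdef
  have hMpos := Mnonneg P hP0 hP1 M hMdiag hMoff
  have hS0 : ∀ a b, 0 ≤ S a b := fun a b =>
    Finset.sum_nonneg fun z _ => mul_nonneg (hd0 z) (le_min (hMpos a z) (hMpos b z))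
  have hSκ : ∀ a b, S a b ≤ κ := by
    intro a b
    rw [← hκ a]
    exact Finset.sum_le_sum fun z _ => mul_le_mul_of_nonneg_left (min_le_left _ _) (hd0 z)
  have hbdd : ∀ a : X, BddBelow (Set.range fun b => S a b) := fun a => Set.Finite.bddBelow
    (Set.finite_range _)
  have hbdd2 : BddBelow (Set.range fun a => ⨅ b, S a b) := Set.Finite.bddBelow (Set.finite_range _)
  have hm_le : ∀ a b, m ≤ S a b := by
    intro a b
    calc m ≤ ⨅ b, S a b := ciInf_le hbdd2 a
      _ ≤ S a b := ciInf_le (hbdd a) b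
  have hm_ge : 0 ≤ m := le_ciInf fun a => le_ciInf fun b => hS0 a b
  have hmκ : m ≤ κ := (hm_le (Classical.arbitrary X) (Classical.arbitrary X)).trans
    (hSκ _ _)
  -- pair identity
  have pairID : ∀ a b, ∑ y, d y * |M a y - M b y| = 2 * κ - 2 * S a b := by
    intro a b
    have habs : ∀ y, d y * |M a y - M b y|
        = d y * M a y + d y * M b y - 2 * (d y * min (M a y) (M b y)) := by
      intro y
      rcases le_total (M a y) (M b y) with h | h
      · rw [min_eq_left h, abs_of_nonpos (by linarith)]
        ring
      · rw [min_eq_right h, abs_of_nonneg (by linarith)]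
        ring
    rw [Finset.sum_congr rfl fun y _ => habs y]
    rw [Finset.sum_sub_distrib, Finset.sum_add_distrib, hκ a, hκ b, ← Finset.mul_sum]
    rw [hSdef]
    ring
  -- reduction of tau1 sums to M
  have keyT : ∀ (v : X → ℝ), (∑ x, v x) = 0 → ∀ y,
      ∑ x, v x * D x y = -(d y * ∑ x, v x * M x y) := by
    intro v hv y
    have x₀ : X := Classical.arbitrary X
    have hDentry : ∀ x, D x y = (∑' t : ℕ, ((P ^ t) x y - d y)) - d y := by
      intro x
      show Z x y - Pi x y = _
      rw [hZ x y]
      rfl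
    have hG := Gconst P hP0 hP1 N hposN d hd1 hstat hsum M hMdiag hMoff y
    set Cy : ℝ := (∑' t : ℕ, ((P ^ t) (Classical.arbitrary X) y - d y))
      + d y * M (Classical.arbitrary X) y with hCy
    have hZ0 : ∀ x, (∑' t : ℕ, ((P ^ t) x y - d y)) = Cy - d y * M x y := by
      intro x
      have := hG x (Classical.arbitrary X)
      rw [hCy]
      linarith
    calc ∑ x, v x * D x y = ∑ x, (v x * (Cy - d y) - d y * (v x * M x y)) := by
          apply Finset.sum_congr rfl
          intro x _
          rw [hDentry x, hZ0 x]
          ring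
      _ = (∑ x, v x) * (Cy - d y) - d y * ∑ x, v x * M x y := by
          rw [Finset.sum_sub_distrib, ← Finset.sum_mul, ← Finset.mul_sum]
      _ = -(d y * ∑ x, v x * M x y) := by rw [hv]; ring
  have rv : ∀ (v : X → ℝ), (∑ x, v x) = 0 →
      (∑ y, |∑ x, v x * D x y|) = ∑ y, d y * |∑ x, v x * M x y| := by
    intro v hv
    apply Finset.sum_congr rfl
    intro y _
    rw [keyT v hv y, abs_neg, abs_mul, abs_of_nonneg (hd0 y)]
  -- the supremum set
  set T : Set ℝ := {r | ∃ v : X → ℝ, (∑ x, |v x|) = 1 ∧ (∑ x, v x) = 0 ∧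
    r = ∑ y, |∑ x, v x * D x y|} with hTdef
  have htau : tau1 (fun x y => D x y) = sSup T := rfl
  have hSaa : ∀ a, S a a = κ := by
    intro a
    rw [hSdef]
    simp only [min_self]
    exact hκ a
  -- upper bound
  have upper : ∀ r ∈ T, r ≤ κ - m := by
    rintro r ⟨v, hv1, hv0, rfl⟩
    rw [rv v hv0]
    set p : X → ℝ := fun x => max (v x) 0 with hp
    set q : X → ℝ := fun x => max (-v x) 0 with hq
    have hp0 : ∀ x, 0 ≤ p x := fun x => le_max_right _ _
    have hq0 : ∀ x, 0 ≤ q x := fun x => le_max_right _ _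
    have hpq : ∀ x, p x - q x = v x := by
      intro x
      rcases le_total 0 (v x) with h | h
      · rw [hp, hq]
        simp only
        rw [max_eq_left h, max_eq_right (by linarith : -v x ≤ 0)]
        ring
      · rw [hp, hq]
        simp only
        rw [max_eq_right h, max_eq_left (by linarith : (0:ℝ) ≤ -v x)]
        ring
    have habs2 : ∀ x, p x + q x = |v x| := by
      intro x
      rcases le_total 0 (v x) with h | h
      · rw [hp, hq]
        simp only
        rw [max_eq_left h, max_eq_right (by linarith : -v x ≤ 0), abs_of_nonneg h]
        ring
      · rw [hp, hq]
        simp only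
        rw [max_eq_right h, max_eq_left (by linarith : (0:ℝ) ≤ -v x), abs_of_nonpos h]
        ring
    have h1 : ∑ x, p x + ∑ x, q x = 1 := by
      rw [← Finset.sum_add_distrib, Finset.sum_congr rfl fun x _ => habs2 x, hv1]
    have h2 : ∑ x, p x - ∑ x, q x = 0 := by
      rw [← Finset.sum_sub_distrib, Finset.sum_congr rfl fun x _ => hpq x, hv0]
    have hsp : ∑ x, p x = 1/2 := by linarith
    have hsq : ∑ x, q x = 1/2 := by linarith
    have hid : ∀ y, ∑ x, v x * M x y
        = 2 * ∑ a, ∑ b, p a * q b * (M a y - M b y) := by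
      intro y
      have e1 : ∑ a, ∑ b, p a * q b * (M a y - M b y)
          = (∑ a, p a * M a y) * (∑ b, q b) - (∑ a, p a) * (∑ b, q b * M b y) := by
        rw [Finset.sum_mul_sum, Finset.sum_mul_sum, ← Finset.sum_sub_distrib]
        apply Finset.sum_congr rfl
        intro a _
        rw [← Finset.sum_sub_distrib]
        apply Finset.sum_congr rfl
        intro b _
        ring
      have e2 : ∑ x, v x * M x y = ∑ x, (p x * M x y - q x * M x y) := by
        apply Finset.sum_congr rfl
        intro x _
        rw [← hpq x]
        ring
      rw [e1, hsq, hsp, e2, Finset.sum_sub_distrib]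
      ring
    calc ∑ y, d y * |∑ x, v x * M x y|
        ≤ ∑ y, ∑ a, ∑ b, 2 * (p a * q b * (d y * |M a y - M b y|)) := by
          apply Finset.sum_le_sum
          intro y _
          have step1 : |∑ x, v x * M x y| ≤ 2 * ∑ a, ∑ b, p a * q b * |M a y - M b y| := by
            rw [hid y, abs_mul, abs_two]
            apply mul_le_mul_of_nonneg_left _ (by norm_num : (0:ℝ) ≤ 2)
            calc |∑ a, ∑ b, p a * q b * (M a y - M b y)|
                ≤ ∑ a, |∑ b, p a * q b * (M a y - M b y)| := Finset.abs_sum_le_sum_abs _ _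
              _ ≤ ∑ a, ∑ b, p a * q b * |M a y - M b y| := by
                  apply Finset.sum_le_sum
                  intro a _
                  calc |∑ b, p a * q b * (M a y - M b y)|
                      ≤ ∑ b, |p a * q b * (M a y - M b y)| := Finset.abs_sum_le_sum_abs _ _
                    _ = ∑ b, p a * q b * |M a y - M b y| := by
                        apply Finset.sum_congr rfl
                        intro b _
                        rw [abs_mul, abs_mul, abs_of_nonneg (hp0 a), abs_of_nonneg (hq0 b)]
          calc d y * |∑ x, v x * M x y|
              ≤ d y * (2 * ∑ a, ∑ b, p a * q b * |M a y - M b y|) :=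
                mul_le_mul_of_nonneg_left step1 (hd0 y)
            _ = ∑ a, ∑ b, 2 * (p a * q b * (d y * |M a y - M b y|)) := by
                simp_rw [Finset.mul_sum]
                apply Finset.sum_congr rfl
                intro a _
                apply Finset.sum_congr rfl
                intro b _
                ring
      _ = ∑ a, ∑ b, (2 * (p a * q b)) * (∑ y, d y * |M a y - M b y|) := by
          rw [Finset.sum_comm]
          apply Finset.sum_congr rfl
          intro a _
          rw [Finset.sum_comm]
          apply Finset.sum_congr rfl
          intro b _
          rw [Finset.mul_sum]
          apply Finset.sum_congr rfl
          intro y _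
          ring
      _ = ∑ a, ∑ b, (2 * (p a * q b)) * (2 * κ - 2 * S a b) := by
          apply Finset.sum_congr rfl
          intro a _
          apply Finset.sum_congr rfl
          intro b _
          rw [pairID a b]
      _ ≤ ∑ a, ∑ b, (2 * (p a * q b)) * (2 * κ - 2 * m) := by
          apply Finset.sum_le_sum
          intro a _
          apply Finset.sum_le_sum
          intro b _
          apply mul_le_mul_of_nonneg_left _ (by positivity)
          have := hm_le a b
          linarith
      _ = κ - m := by
          have hfold : ∑ a, ∑ b, (2 * (p a * q b)) * (2 * κ - 2 * m)
              = ((∑ a, p a) * (∑ b, q b)) * (2 * (2 * κ - 2 * m)) := by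
            rw [Finset.sum_mul_sum, Finset.sum_mul]
            apply Finset.sum_congr rfl
            intro a _
            rw [Finset.sum_mul]
            apply Finset.sum_congr rfl
            intro b _
            ring
          rw [hfold, hsp, hsq]
          ring
  by_cases hcard : 1 < Fintype.card X
  · -- there is a minimizing pair with distinct entries
    obtain ⟨pm, -, hpm⟩ := Finset.exists_min_image Finset.univ (fun pr : X × X => S pr.1 pr.2)
      ⟨(Classical.arbitrary X, Classical.arbitrary X), Finset.mem_univ _⟩
    have hmval : m = S pm.1 pm.2 :=
      le_antisymm (hm_le pm.1 pm.2) (le_ciInf fun a => le_ciInf fun b => hpm (a, b) (Finset.mem_univ _))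
    have hpair : ∃ a b : X, a ≠ b ∧ S a b = m := by
      by_cases hne : pm.1 = pm.2
      · obtain ⟨a, b, hab⟩ := Fintype.exists_pair_of_one_lt_card hcard
        refine ⟨a, b, hab, le_antisymm ?_ (hm_le a b)⟩
        rw [hmval, hne, hSaa]
        exact hSκ a b
      · exact ⟨pm.1, pm.2, hne, hmval.symm⟩
    obtain ⟨a, b, hab, hSab⟩ := hpair
    set v : X → ℝ := fun x => (if x = a then (1:ℝ)/2 else 0) - (if x = b then (1:ℝ)/2 else 0)
      with hvdef
    have hv0 : ∑ x, v x = 0 := by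
      rw [hvdef]
      rw [Finset.sum_sub_distrib]
      simp [Finset.sum_ite_eq']
    have hva : v a = 1/2 := by simp [hvdef, hab]
    have hvb : v b = -(1/2) := by simp [hvdef, Ne.symm hab]
    have hvo : ∀ x, x ≠ a → x ≠ b → v x = 0 := by
      intro x h1 h2
      simp [hvdef, h1, h2]
    have hv1 : ∑ x, |v x| = 1 := by
      have hsub : ∑ x ∈ ({a, b} : Finset X), |v x| = ∑ x, |v x| := by
        apply Finset.sum_subset (Finset.subset_univ _)
        intro x _ hx
        simp only [Finset.mem_insert, Finset.mem_singleton] at hx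
        push_neg at hx
        rw [hvo x hx.1 hx.2, abs_zero]
      rw [← hsub, Finset.sum_pair hab, hva, hvb]
      rw [abs_neg]
      norm_num [abs_of_nonneg]
    have hvM : ∀ y, ∑ x, v x * M x y = (M a y - M b y) / 2 := by
      intro y
      have hsub : ∑ x ∈ ({a, b} : Finset X), v x * M x y = ∑ x, v x * M x y := by
        apply Finset.sum_subset (Finset.subset_univ _)
        intro x _ hx
        simp only [Finset.mem_insert, Finset.mem_singleton] at hx
        push_neg at hx
        rw [hvo x hx.1 hx.2, zero_mul]
      rw [← hsub, Finset.sum_pair hab, hva, hvb]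
      ring
    have hval : (∑ y, |∑ x, v x * D x y|) = κ - m := by
      rw [rv v hv0]
      calc ∑ y, d y * |∑ x, v x * M x y|
          = ∑ y, d y * |M a y - M b y| / 2 := by
            apply Finset.sum_congr rfl
            intro y _
            rw [hvM y, abs_div, abs_two]
            ring
        _ = κ - m := by
            rw [← Finset.sum_div, pairID a b, hSab]
            ring
    have hGreat : IsGreatest T (κ - m) := ⟨⟨v, hv1, hv0, hval.symm⟩, upper⟩
    rw [htau, hGreat.csSup_eq]
    exact ⟨rfl, by linarith⟩
  · -- singleton case
    have hcard1 : Fintype.card X = 1 := by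
      have := Fintype.card_pos (α := X)
      omega
    obtain ⟨a, ha⟩ := Fintype.card_eq_one_iff.1 hcard1
    have huniv : (Finset.univ : Finset X) = {a} :=
      Finset.eq_singleton_iff_unique_mem.2 ⟨Finset.mem_univ a, fun x _ => ha x⟩
    have hTe : T = (∅ : Set ℝ) := by
      ext r
      simp only [hTdef, Set.mem_setOf_eq, Set.mem_empty_iff_false, iff_false]
      rintro ⟨v, hv1, hv0, -⟩
      rw [huniv, Finset.sum_singleton] at hv1 hv0
      rw [hv0] at hv1
      simp at hv1
    have hκ0 : κ = 0 := by
      have h := hκ a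
      rw [huniv, Finset.sum_singleton, hMdiag a, mul_zero] at h
      exact h.symm
    have hm0 : m = 0 := le_antisymm (by rw [← hκ0]; exact hmκ) hm_ge
    rw [htau, hTe, Real.sSup_empty, hκ0, hm0]
    norm_num
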